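/- Let p, q, w_0, w_1 be integers and let (w_n)_{n≥0} be the binary recurrence defined by w_{n+2} = p·w_{n+1} + q·w_n for all n ≥ 0. If p ≡ 2 (mod 4), q ≡ 3 (mod 4), and w_0 + w_1 is odd, then for every integer k ≥ 1 the terms w_0, w_1, …, w_{2^k − 1} are pairwise incongruent modulo 2^k; consequently the discriminator satisfies D_w(2^k) = 2^k for every k ≥ 1. -/

import Mathlib

/-- The discriminator of a sequence `w`: the smallest positive integer `m` such that
`w 0, …, w (n-1)` are pairwise incongruent modulo `m`. -/
noncomputable def discriminator (w : ℕ → ℤ) (n : ℕ) : ℕ :=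
  sInf {m : ℕ | 0 < m ∧ ∀ i < n, ∀ j < n, w i ≡ w j [ZMOD (m : ℤ)] → i = j}


/-- Propagation lemma: if `v` satisfies the recurrence and `v 0 ≡ v 1 ≡ m (mod 2m)`,
then `v n ≡ m (mod 2m)` for all `n`. -/
lemma prop_aux {p q : ℤ} (hp : p % 4 = 2) (hq : q % 4 = 3)
    {v : ℕ → ℤ} (hv : ∀ n, v (n+2) = p * v (n+1) + q * v n) (m : ℤ)
    (h0 : 2*m ∣ v 0 - m) (h1 : 2*m ∣ v 1 - m) : ∀ n, 2*m ∣ v n - m := by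
  obtain ⟨a, ha⟩ : ∃ a, p = 4*a + 2 := ⟨p / 4, by omega⟩
  obtain ⟨b, hb⟩ : ∃ b, q = 4*b + 3 := ⟨q / 4, by omega⟩
  have H : ∀ n, 2*m ∣ v n - m ∧ 2*m ∣ v (n+1) - m := by
    intro n
    induction n with
    | zero => exact ⟨h0, h1⟩
    | succ n ih =>
      refine ⟨ih.2, ?_⟩
      have key : v (n+2) - m = p*(v (n+1) - m) + q*(v n - m) + (2*m)*(2*(a+b+1)) := by
        rw [hv n, ha, hb]; ring
      rw [key]
      exact dvd_add (dvd_add (ih.2.mul_left p) (ih.1.mul_left q)) ⟨_, rfl⟩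
  exact fun n => (H n).1

/-- If `v n ≡ m (mod 2m)` for all n, then `v (n+2) + v n ≡ 2m (mod 4m)`. -/
lemma step2_aux {p q : ℤ} (hp : p % 4 = 2) (hq : q % 4 = 3)
    {v : ℕ → ℤ} (hv : ∀ n, v (n+2) = p * v (n+1) + q * v n) (m : ℤ)
    (hall : ∀ n, 2*m ∣ v n - m) :
    ∀ n, 4*m ∣ v (n+2) + v n - 2*m := by
  obtain ⟨a, ha⟩ : ∃ a, p = 4*a + 2 := ⟨p / 4, by omega⟩
  obtain ⟨b, hb⟩ : ∃ b, q = 4*b + 3 := ⟨q / 4, by omega⟩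
  intro n
  obtain ⟨s, hs⟩ := hall (n+1)
  obtain ⟨t, ht⟩ := hall n
  refine ⟨(2*a+1)*s + (2*(b+1))*t + (a+b+1), ?_⟩
  have e1 : v (n+1) = m + 2*m*s := by linarith
  have e0 : v n = m + 2*m*t := by linarith
  rw [hv n, e1, e0, ha, hb]; ring

/-- Period-4 behaviour mod 4m. -/
lemma per4_aux {v : ℕ → ℤ} (m : ℤ)
    (S : ∀ n, 4*m ∣ v (n+2) + v n - 2*m) :
    ∀ t n, 4*m ∣ v (n + 4*t) - v n := by
  have step : ∀ n, 4*m ∣ v (n+4) - v n := by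
    intro n
    have h1 := S (n+2)
    have h2 := S n
    have e : v (n+4) - v n = (v (n+2+2) + v (n+2) - 2*m) - (v (n+2) + v n - 2*m) := by
      show v (n+4) - v n = (v (n+4) + v (n+2) - 2*m) - (v (n+2) + v n - 2*m)
      ring
    rw [e]; exact dvd_sub h1 h2
  intro t
  induction t with
  | zero => intro n; simp
  | succ t ih =>
    intro n
    have hidx : n + 4*(t+1) = (n + 4*t) + 4 := by ring
    have e : v (n + 4*(t+1)) - v n = (v ((n + 4*t) + 4) - v (n + 4*t)) + (v (n + 4*t) - v n) := by
      rw [hidx]; ring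
    rw [e]; exact dvd_add (step _) (ih n)

/-- The shifted-difference sequence satisfies the same recurrence. -/
lemma drec_aux {p q : ℤ} {w : ℕ → ℤ}
    (hrec : ∀ n : ℕ, w (n + 2) = p * w (n + 1) + q * w n) (c : ℕ) :
    ∀ n, (w ((n+2) + c) - w (n+2)) = p * (w ((n+1) + c) - w (n+1)) + q * (w (n + c) - w n) := by
  intro n
  have h1 := hrec (n + c)
  have h2 := hrec n
  have e2 : n + c + 2 = (n+2) + c := by ring
  have e1 : n + c + 1 = (n+1) + c := by ring
  rw [e2, e1] at h1
  rw [h1, h2]; ring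

/-- Key lemma A: `w (n + 2^k) ≡ w n + 2^k (mod 2^(k+1))` for `k ≥ 1`. -/
lemma A_aux {p q : ℤ} {w : ℕ → ℤ}
    (hrec : ∀ n : ℕ, w (n + 2) = p * w (n + 1) + q * w n)
    (hp : p % 4 = 2) (hq : q % 4 = 3) (hodd : Odd (w 0 + w 1)) :
    ∀ k : ℕ, 1 ≤ k → ∀ n, (2:ℤ)^(k+1) ∣ w (n + 2^k) - w n - 2^k := by
  obtain ⟨a, ha⟩ : ∃ a, p = 4*a + 2 := ⟨p / 4, by omega⟩
  obtain ⟨b, hb⟩ : ∃ b, q = 4*b + 3 := ⟨q / 4, by omega⟩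
  obtain ⟨c, hc⟩ := hodd
  intro k hk
  induction k, hk using Nat.le_induction with
  | base =>
    have hvrec : ∀ n, (fun n => w (n + 2) - w n) (n+2)
        = p * (fun n => w (n + 2) - w n) (n+1) + q * (fun n => w (n + 2) - w n) n :=
      drec_aux hrec 2
    have h0 : 2*(2:ℤ) ∣ (w (0+2) - w 0) - 2 := by
      refine ⟨a*(w 1) + b*(w 0) + c, ?_⟩
      show w 2 - w 0 - 2 = 4*(a*(w 1) + b*(w 0) + c)
      rw [hrec 0, ha, hb]; linear_combination 2*hc
    have h1 : 2*(2:ℤ) ∣ (w (1+2) - w 1) - 2 := by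
      refine ⟨a*(w 2) + b*(w 1) + 2*a*(w 1) + w 1 + 2*b*(w 0) + w 0 + c, ?_⟩
      show w 3 - w 1 - 2 = 4*_
      rw [hrec 1, hrec 0, ha, hb]; linear_combination 2*hc
    have := prop_aux (v := fun n => w (n + 2) - w n) hp hq hvrec 2 h0 h1
    intro n
    have hn := this n
    have e : (2:ℤ)^(1+1) = 2*2 := by norm_num
    have e2 : (2:ℕ)^1 = 2 := by norm_num
    rw [e, e2]
    show 2*2 ∣ w (n+2) - w n - (2:ℤ)^1
    norm_num
    convert hn using 2
    norm_num
  | succ k hk ih =>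
    set M : ℤ := 2^k with hM
    set d : ℕ → ℤ := fun n => w (n + 2^k) - w n with hd
    have hdrec : ∀ n, d (n+2) = p * d (n+1) + q * d n := drec_aux hrec (2^k)
    have hall : ∀ n, 2*M ∣ d n - M := by
      intro n
      have := ih n
      have e : (2:ℤ)^(k+1) = 2*M := by rw [hM, pow_succ]; ring
      rw [e] at this
      exact this
    have S := step2_aux hp hq hdrec M hall
    have P4 := per4_aux M S
    have key : ∀ n, 4*M ∣ d (n + 2^k) + d n - 2*M := by
      intro n
      rcases eq_or_lt_of_le hk with heq | hlt
      · -- k = 1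
        have : (2:ℕ)^k = 2 := by rw [← heq]; norm_num
        rw [this]
        exact S n
      · -- k ≥ 2
        have hk2 : 2 ≤ k := hlt
        have e : (2:ℕ)^k = 4 * 2^(k-2) := by
          have : k = 2 + (k - 2) := by omega
          rw [this, pow_add]; norm_num
        have h1 : 4*M ∣ d (n + 2^k) - d n := by rw [e]; exact P4 (2^(k-2)) n
        have h2 : 4*M ∣ 2*(d n - M) := by
          have := mul_dvd_mul_left (2:ℤ) (hall n)
          have e4 : (2:ℤ)*(2*M) = 4*M := by ring
          rwa [e4] at this
        have e3 : d (n + 2^k) + d n - 2*M = (d (n + 2^k) - d n) + 2*(d n - M) := by ring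
        rw [e3]; exact dvd_add h1 h2
    -- now apply prop_aux to D n = w (n + 2^(k+1)) - w n with m = 2*M
    have hpow : (2:ℕ)^(k+1) = 2^k + 2^k := by rw [pow_succ]; omega
    have hDrec : ∀ n, (fun n => w (n + 2^(k+1)) - w n) (n+2)
        = p * (fun n => w (n + 2^(k+1)) - w n) (n+1) + q * (fun n => w (n + 2^(k+1)) - w n) n :=
      drec_aux hrec (2^(k+1))
    have hDd : ∀ n, w (n + 2^(k+1)) - w n - 2*M = d (n + 2^k) + d n - 2*M := by
      intro n
      have : n + 2^(k+1) = (n + 2^k) + 2^k := by rw [hpow]; omega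
      rw [this]
      simp only [hd]
      ring
    have h0 : 2*(2*M) ∣ (fun n => w (n + 2^(k+1)) - w n) 0 - 2*M := by
      have e4 : (2:ℤ)*(2*M) = 4*M := by ring
      rw [e4]
      show 4*M ∣ w (0 + 2^(k+1)) - w 0 - 2*M
      rw [hDd 0]; exact key 0
    have h1 : 2*(2*M) ∣ (fun n => w (n + 2^(k+1)) - w n) 1 - 2*M := by
      have e4 : (2:ℤ)*(2*M) = 4*M := by ring
      rw [e4]
      show 4*M ∣ w (1 + 2^(k+1)) - w 1 - 2*M
      rw [hDd 1]; exact key 1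
    have final := prop_aux (v := fun n => w (n + 2^(k+1)) - w n) hp hq hDrec (2*M) h0 h1
    intro n
    have hn := final n
    have e1 : (2:ℤ)^(k+1+1) = 2*(2*M) := by rw [hM]; ring
    have e2 : (2:ℤ)^(k+1) = 2*M := by rw [hM, pow_succ]; ring
    rw [e1, e2]
    exact hn

/-- Lemma B: `w (n + t·2^k) ≡ w n + t·2^k (mod 2^(k+1))`. -/
lemma B_aux {p q : ℤ} {w : ℕ → ℤ}
    (hrec : ∀ n : ℕ, w (n + 2) = p * w (n + 1) + q * w n)
    (hp : p % 4 = 2) (hq : q % 4 = 3) (hodd : Odd (w 0 + w 1))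
    (k : ℕ) (hk : 1 ≤ k) :
    ∀ t n : ℕ, (2:ℤ)^(k+1) ∣ w (n + t * 2^k) - w n - (t:ℤ) * 2^k := by
  have hA := A_aux hrec hp hq hodd k hk
  intro t
  induction t with
  | zero => intro n; simp
  | succ t ih =>
    intro n
    have hidx : n + (t+1) * 2^k = (n + t * 2^k) + 2^k := by ring
    have e : w (n + (t+1) * 2^k) - w n - ((t:ℤ)+1) * 2^k
        = (w ((n + t * 2^k) + 2^k) - w (n + t * 2^k) - 2^k)
          + (w (n + t * 2^k) - w n - (t:ℤ) * 2^k) := by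
      rw [hidx]; ring
    push_cast
    rw [e]
    exact dvd_add (hA _) (ih n)

/-- Parity: `w (n + 2t) ≡ w n (mod 2)`. -/
lemma par_aux {p q : ℤ} {w : ℕ → ℤ}
    (hrec : ∀ n : ℕ, w (n + 2) = p * w (n + 1) + q * w n)
    (hp : p % 4 = 2) (hq : q % 4 = 3) :
    ∀ t n : ℕ, (2:ℤ) ∣ w (n + 2*t) - w n := by
  obtain ⟨a, ha⟩ : ∃ a, p = 4*a + 2 := ⟨p / 4, by omega⟩
  obtain ⟨b, hb⟩ : ∃ b, q = 4*b + 3 := ⟨q / 4, by omega⟩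
  have step : ∀ n, (2:ℤ) ∣ w (n+2) - w n := by
    intro n
    refine ⟨(2*a+1) * w (n+1) + (2*b+1) * w n, ?_⟩
    rw [hrec n, ha, hb]; ring
  intro t
  induction t with
  | zero => intro n; simp
  | succ t ih =>
    intro n
    have hidx : n + 2*(t+1) = (n + 2*t) + 2 := by ring
    have e : w (n + 2*(t+1)) - w n = (w ((n + 2*t) + 2) - w (n + 2*t)) + (w (n + 2*t) - w n) := by
      rw [hidx]; ring
    rw [e]; exact dvd_add (step _) (ih n)

/-- Main characterization: `w m ≡ w n (mod 2^k)` iff `m ≡ n (mod 2^k)`, for `k ≥ 1`. -/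
lemma Q_aux {p q : ℤ} {w : ℕ → ℤ}
    (hrec : ∀ n : ℕ, w (n + 2) = p * w (n + 1) + q * w n)
    (hp : p % 4 = 2) (hq : q % 4 = 3) (hodd : Odd (w 0 + w 1)) :
    ∀ k : ℕ, 1 ≤ k → ∀ m n : ℕ, ((2:ℤ)^k ∣ w m - w n ↔ m % 2^k = n % 2^k) := by
  obtain ⟨c, hc⟩ := hodd
  intro k hk
  induction k, hk using Nat.le_induction with
  | base =>
    intro m n
    have hpar : ∀ m : ℕ, (2:ℤ) ∣ w m - w (m % 2) := by
      intro m
      have := par_aux hrec hp hq (m / 2) (m % 2)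
      rwa [Nat.mod_add_div m 2] at this
    constructor
    · intro h
      have hcomb : (2:ℤ) ∣ w (m % 2) - w (n % 2) := by
        have e : w (m % 2) - w (n % 2)
            = (w m - w n) - (w m - w (m % 2)) + (w n - w (n % 2)) := by ring
        rw [e]
        have h1 : (2:ℤ)^1 = 2 := by norm_num
        rw [h1] at h
        exact dvd_add (dvd_sub h (hpar m)) (hpar n)
      rcases Nat.mod_two_eq_zero_or_one m with hm | hm <;>
        rcases Nat.mod_two_eq_zero_or_one n with hn | hn <;>
        simp only [pow_one, hm, hn] at hcomb ⊢
      · obtain ⟨t, ht⟩ := hcomb; omega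
      · obtain ⟨t, ht⟩ := hcomb; omega
    · intro h
      have half : ∀ m n : ℕ, n ≤ m → m % 2 = n % 2 → (2:ℤ) ∣ w m - w n := by
        intro m n hle hmod
        have hidx : m = n + 2 * ((m - n) / 2) := by omega
        rw [hidx]
        exact par_aux hrec hp hq ((m - n) / 2) n
      have h1 : (2:ℤ)^1 = 2 := by norm_num
      rw [h1]
      simp only [pow_one] at h
      rcases le_total n m with hle | hle
      · exact half m n hle h
      · have := half n m hle h.symm
        have e : w m - w n = -(w n - w m) := by ring
        rw [e]; exact dvd_neg.mpr this
  | succ k hk ih =>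
    have hB := B_aux hrec hp hq ⟨c, hc⟩ k hk
    have half1 : ∀ m n : ℕ, n ≤ m → ((2:ℤ)^(k+1) ∣ w m - w n) → m % 2^(k+1) = n % 2^(k+1) := by
      intro m n hle h
      have h2k : (2:ℤ)^k ∣ w m - w n := dvd_trans (pow_dvd_pow 2 (Nat.le_succ k)) h
      have hmod := (ih m n).mp h2k
      obtain ⟨t, ht⟩ : (2:ℕ)^k ∣ m - n := (Nat.modEq_iff_dvd' hle).mp hmod.symm
      have hm : m = n + t * 2^k := by
        rw [Nat.mul_comm, ← ht]; omega
      have hBt := hB t n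
      rw [← hm] at hBt
      have hdt : (2:ℤ)^(k+1) ∣ (t:ℤ) * 2^k := by
        have e : (t:ℤ) * 2^k = (w m - w n) - (w m - w n - (t:ℤ) * 2^k) := by ring
        rw [e]; exact dvd_sub h hBt
      have h2t : 2 ∣ t := by
        have e1 : (2:ℤ)^(k+1) = 2^k * 2 := by rw [pow_succ]
        have e2 : (t:ℤ) * 2^k = 2^k * t := by ring
        rw [e1, e2] at hdt
        have := (mul_dvd_mul_iff_left (pow_ne_zero k (two_ne_zero (α := ℤ)))).mp hdt
        exact_mod_cast this
      obtain ⟨s, hs⟩ := h2t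
      have hm2 : m = n + s * 2^(k+1) := by
        rw [hm, hs, pow_succ]; ring
      rw [hm2, Nat.add_mul_mod_self_right]
    have half2 : ∀ m n : ℕ, n ≤ m → m % 2^(k+1) = n % 2^(k+1) → (2:ℤ)^(k+1) ∣ w m - w n := by
      intro m n hle h
      obtain ⟨t, ht⟩ : (2:ℕ)^(k+1) ∣ m - n := (Nat.modEq_iff_dvd' hle).mp h.symm
      have hm : m = n + (2*t) * 2^k := by
        have e : (2*t) * 2^k = 2^(k+1) * t := by rw [pow_succ]; ring
        rw [e, ← ht]; omega
      have hBt := hB (2*t) n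
      rw [← hm] at hBt
      have hd2 : (2:ℤ)^(k+1) ∣ ((2*t : ℕ):ℤ) * 2^k := by
        refine ⟨t, ?_⟩
        push_cast
        rw [pow_succ]; ring
      have e : w m - w n = (w m - w n - ((2*t:ℕ):ℤ) * 2^k) + ((2*t:ℕ):ℤ) * 2^k := by ring
      rw [e]; exact dvd_add hBt hd2
    intro m n
    constructor
    · intro h
      rcases le_total n m with hle | hle
      · exact half1 m n hle h
      · refine (half1 n m hle ?_).symm
        have e : w n - w m = -(w m - w n) := by ring
        rw [e]; exact dvd_neg.mpr h
    · intro h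
      rcases le_total n m with hle | hle
      · exact half2 m n hle h
      · have := half2 n m hle h.symm
        have e : w m - w n = -(w n - w m) := by ring
        rw [e]; exact dvd_neg.mpr this

/-- If `p ≡ 2 (mod 4)`, `q ≡ 3 (mod 4)` and `w 0 + w 1` is odd, then for
every `k ≥ 1` the terms `w 0, …, w (2^k - 1)` are pairwise incongruent modulo `2^k`, and
consequently the discriminator satisfies `D_w(2^k) = 2^k`. -/
theorem stmt1 (p q : ℤ) (w : ℕ → ℤ)
    (hrec : ∀ n : ℕ, w (n + 2) = p * w (n + 1) + q * w n)
    (hp : p % 4 = 2) (hq : q % 4 = 3) (hodd : Odd (w 0 + w 1)) :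
    ∀ k : ℕ, 1 ≤ k →
      (∀ i < 2 ^ k, ∀ j < 2 ^ k, w i ≡ w j [ZMOD (2 ^ k : ℤ)] → i = j) ∧
      discriminator w (2 ^ k) = 2 ^ k := by
  intro k hk
  have hQ := Q_aux hrec hp hq hodd k hk
  have hinj : ∀ i < 2 ^ k, ∀ j < 2 ^ k, w i ≡ w j [ZMOD (2 ^ k : ℤ)] → i = j := by
    intro i hi j hj hij
    have hd : (2:ℤ)^k ∣ w i - w j := by
      have h1 := Int.ModEq.dvd hij
      have e : w i - w j = -(w j - w i) := by ring
      rw [e]; exact dvd_neg.mpr h1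
    have h2 := (hQ i j).mp hd
    rwa [Nat.mod_eq_of_lt hi, Nat.mod_eq_of_lt hj] at h2
  refine ⟨hinj, ?_⟩
  have hmem : 2 ^ k ∈ {m : ℕ | 0 < m ∧ ∀ i < 2 ^ k, ∀ j < 2 ^ k,
      w i ≡ w j [ZMOD (m : ℤ)] → i = j} := by
    refine ⟨by positivity, ?_⟩
    intro i hi j hj hij
    apply hinj i hi j hj
    have e : ((2 ^ k : ℕ) : ℤ) = (2 ^ k : ℤ) := by push_cast; ring
    rwa [e] at hij
  have hlb : ∀ m ∈ {m : ℕ | 0 < m ∧ ∀ i < 2 ^ k, ∀ j < 2 ^ k,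
      w i ≡ w j [ZMOD (m : ℤ)] → i = j}, 2 ^ k ≤ m := by
    rintro m ⟨hm0, hminj⟩
    haveI : NeZero m := ⟨hm0.ne'⟩
    have hf : Function.Injective (fun i : Fin (2 ^ k) => ((w i : ℤ) : ZMod m)) := by
      intro i j hij
      have h1 : w i ≡ w j [ZMOD (m : ℤ)] := (ZMod.intCast_eq_intCast_iff _ _ _).mp hij
      exact Fin.ext (hminj i i.isLt j j.isLt h1)
    have h2 := Fintype.card_le_of_injective _ hf
    simpa [ZMod.card] using h2
  unfold discriminator
  apply le_antisymm (Nat.sInf_le hmem)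
  exact hlb _ (Nat.sInf_mem ⟨2 ^ k, hmem⟩)
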